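/- arXiv:2604.19911 — 2 statements merged into one kernel-verified Lean document; each statement's English description precedes it below -/
import Mathlib

section
/- (Theorem 1(ii)) In the variant of 3-bit PMRAC, suppose the average success probability attains the optimal value S_Q = 1/2 + 1/√6. Then for all x, x' ∈ {0,1}³ with x ≠ x': Tr[ρ_x ρ_{x'}] = 0 whenever x' is the bitwise complement x̄ of x or x' lies in the same parity class as x, and Tr[ρ_x ρ_{x'}] = 1/3 whenever x' lies in the opposite parity class and x' ≠ x̄. -/
open Matrix
open scoped Kronecker ComplexOrder

noncomputable section

abbrev Mat2 := Matrix (Fin 2) (Fin 2) ℂ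
abbrev Mat4 := Matrix (Fin 2 × Fin 2) (Fin 2 × Fin 2) ℂ

/-- parity of x₁+x₂+x₃ (addition in Fin 2 is mod 2). -/
def par (x : Fin 3 → Fin 2) : Fin 2 := x 0 + x 1 + x 2

/-- bitwise complement of x ∈ {0,1}³. -/
def bitcompl (x : Fin 3 → Fin 2) : Fin 3 → Fin 2 := fun i => x i + 1

/-- The state ρ_x = (U_x ⊗ I₂) ρ (U_x ⊗ I₂)†. -/
def ρst (ρ : Mat4) (U : (Fin 3 → Fin 2) → Mat2) (x : Fin 3 → Fin 2) : Mat4 :=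
  (U x ⊗ₖ (1 : Mat2)) * ρ * (U x ⊗ₖ (1 : Mat2))ᴴ

namespace PMRAC

/-- trace of MᴴM is nonnegative. -/
lemma trace_conjT_mul_self_nonneg (M : Mat4) : 0 ≤ (Mᴴ * M).trace := by
  rw [Matrix.trace]
  refine Finset.sum_nonneg fun j _ => ?_
  rw [Matrix.diag_apply, Matrix.mul_apply]
  exact Finset.sum_nonneg fun i _ => by
    simpa [Matrix.conjTranspose_apply] using star_mul_self_nonneg (M i j)

lemma eq_zero_of_trace_conjT_mul_self (M : Mat4) (h : (Mᴴ * M).trace = 0) : M = 0 := by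
  have hsum : ∑ j, ∑ i, star (M i j) * M i j = 0 := by
    rw [← h, Matrix.trace]
    refine Finset.sum_congr rfl fun j _ => ?_
    rw [Matrix.diag_apply, Matrix.mul_apply]
    exact Finset.sum_congr rfl fun i _ => by simp [Matrix.conjTranspose_apply]
  have hj := (Finset.sum_eq_zero_iff_of_nonneg (fun j _ =>
      Finset.sum_nonneg fun i _ => star_mul_self_nonneg (M i j))).mp hsum
  ext i j
  have hi := (Finset.sum_eq_zero_iff_of_nonneg (fun i _ =>
      star_mul_self_nonneg (M i j))).mp (hj j (Finset.mem_univ j)) i (Finset.mem_univ i)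
  have hns : star (M i j) * M i j = (Complex.normSq (M i j) : ℂ) := by
    rw [Complex.star_def, ← Complex.normSq_eq_conj_mul_self]
  rw [hns] at hi
  have : Complex.normSq (M i j) = 0 := by exact_mod_cast hi
  simpa using Complex.normSq_eq_zero.mp this

lemma herm_sq_trace_nonneg {M : Mat4} (hM : M.IsHermitian) : 0 ≤ (M * M).trace := by
  have := trace_conjT_mul_self_nonneg M
  rwa [hM.eq] at this

lemma herm_eq_zero_of_sq_trace {M : Mat4} (hM : M.IsHermitian) (h : (M * M).trace = 0) :
    M = 0 := by
  refine eq_zero_of_trace_conjT_mul_self M ?_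
  rwa [hM.eq]

lemma psd_pair_trace_eq (P Q : Mat4) (A B : Mat4) (hP : P = Aᴴ * A) (hQ : Q = Bᴴ * B) :
    (P * Q).trace = ((A * Bᴴ)ᴴ * (A * Bᴴ)).trace := by
  rw [hP, hQ, Matrix.conjTranspose_mul, Matrix.conjTranspose_conjTranspose]
  rw [Matrix.trace_mul_comm (B * Aᴴ) (A * Bᴴ)]
  simp only [Matrix.mul_assoc]
  rw [Matrix.trace_mul_comm]
  simp only [Matrix.mul_assoc]

open scoped MatrixOrder in
lemma psd_eq_conjT_mul_self {P : Mat4} (hP : P.PosSemidef) : ∃ A : Mat4, P = Aᴴ * A := by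
  classical
  obtain ⟨X, hX, -, hXP⟩ :=
    sub_zero P ▸ CFC.exists_sqrt_of_isSelfAdjoint_of_quasispectrumRestricts hP.isHermitian
      (QuasispectrumRestricts.nnreal_of_nonneg hP.nonneg)
  refine ⟨X, ?_⟩
  rw [sub_zero] at hXP
  rw [← hXP, ← Matrix.star_eq_conjTranspose, hX.star_eq]

lemma psd_trace_nonneg {P Q : Mat4} (hP : P.PosSemidef) (hQ : Q.PosSemidef) :
    0 ≤ (P * Q).trace := by
  obtain ⟨A, hA⟩ := psd_eq_conjT_mul_self hP
  obtain ⟨B, hB⟩ := psd_eq_conjT_mul_self hQ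
  rw [psd_pair_trace_eq P Q A B hA hB]
  exact trace_conjT_mul_self_nonneg _

lemma psd_mul_eq_zero {P Q : Mat4} (hP : P.PosSemidef) (hQ : Q.PosSemidef)
    (h : (P * Q).trace = 0) : P * Q = 0 := by
  obtain ⟨A, hA⟩ := psd_eq_conjT_mul_self hP
  obtain ⟨B, hB⟩ := psd_eq_conjT_mul_self hQ
  rw [psd_pair_trace_eq P Q A B hA hB] at h
  have hz : A * Bᴴ = 0 := eq_zero_of_trace_conjT_mul_self _ h
  calc P * Q = Aᴴ * (A * Bᴴ) * B := by
        rw [hA, hB]; simp only [Matrix.mul_assoc]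
  _ = 0 := by rw [hz]; simp

/-- key spectral facts for a PSD matrix of trace one. -/
lemma trace_sq_facts (ρ : Mat4) (hρ : ρ.PosSemidef) (h1 : ρ.trace = 1) :
    ∃ r : ℝ, (ρ * ρ).trace = (r:ℂ) ∧ r ≤ 1 ∧ ((ρ*ρ).trace = 1 → ρ * ρ = ρ) := by
  have hH := hρ.1
  set V : Mat4 := (hH.eigenvectorUnitary : Mat4) with hV
  set D : Mat4 := diagonal (RCLike.ofReal ∘ hH.eigenvalues) with hD
  have hsp : ρ = V * D * Vᴴ := by
    rw [hV, hD, ← Matrix.star_eq_conjTranspose]; exact hH.spectral_theorem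
  have hVV : Vᴴ * V = 1 := by
    rw [← Matrix.star_eq_conjTranspose]
    exact (Matrix.mem_unitaryGroup_iff').mp hH.eigenvectorUnitary.2
  have hsq : ρ * ρ = V * (D * D) * Vᴴ := by
    rw [hsp]
    calc V * D * Vᴴ * (V * D * Vᴴ) = V * D * (Vᴴ * V) * (D * Vᴴ) := by
          simp only [Matrix.mul_assoc]
    _ = V * (D * D) * Vᴴ := by rw [hVV, Matrix.mul_one]; simp only [Matrix.mul_assoc]
  have htrconj : ∀ M : Mat4, (V * M * Vᴴ).trace = M.trace := by
    intro M
    rw [Matrix.trace_mul_cycle, hVV, Matrix.one_mul]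
  have htr2 : (ρ * ρ).trace = ((∑ i, (hH.eigenvalues i)^2 : ℝ) : ℂ) := by
    rw [hsq, htrconj, hD, diagonal_mul_diagonal, trace_diagonal]
    push_cast
    refine Finset.sum_congr rfl fun i _ => ?_
    simp [RCLike.ofReal_alg]; ring
  have htr1 : ((∑ i, hH.eigenvalues i : ℝ) : ℂ) = 1 := by
    rw [← h1]; nth_rewrite 2 [hsp]
    rw [htrconj, hD, trace_diagonal]
    push_cast; rfl
  have hev0 : ∀ i, 0 ≤ hH.eigenvalues i := hρ.eigenvalues_nonneg
  have hsum1 : (∑ i, hH.eigenvalues i) = 1 := by exact_mod_cast htr1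
  have hev1 : ∀ i, hH.eigenvalues i ≤ 1 := by
    intro i
    calc hH.eigenvalues i ≤ ∑ j, hH.eigenvalues j :=
      Finset.single_le_sum (fun j _ => hev0 j) (Finset.mem_univ i)
    _ = 1 := hsum1
  refine ⟨∑ i, (hH.eigenvalues i)^2, htr2, ?_, ?_⟩
  · calc (∑ i, (hH.eigenvalues i)^2) ≤ ∑ i, hH.eigenvalues i :=
        Finset.sum_le_sum fun i _ => by nlinarith [hev0 i, hev1 i]
    _ = 1 := hsum1
  · intro hone
    have hr1 : (∑ i, (hH.eigenvalues i)^2 : ℝ) = 1 := by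
      rw [htr2] at hone; exact_mod_cast hone
    have heach : ∀ i ∈ Finset.univ, hH.eigenvalues i - (hH.eigenvalues i)^2 = 0 := by
      rw [← Finset.sum_eq_zero_iff_of_nonneg (fun i _ => by nlinarith [hev0 i, hev1 i])]
      rw [Finset.sum_sub_distrib, hsum1, hr1]; ring
    have hDD : D * D = D := by
      rw [hD, diagonal_mul_diagonal]
      refine congrArg _ (funext fun i => ?_)
      have h := heach i (Finset.mem_univ i)
      simp only [Function.comp_apply]
      rw [← RCLike.ofReal_mul]
      congr 1; nlinarith
    rw [hsq, hDD, ← hsp]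

lemma conj_trace {V : Mat4} (hVV : Vᴴ * V = 1) (M : Mat4) :
    (V * M * Vᴴ).trace = M.trace := by
  rw [Matrix.trace_mul_cycle, hVV, Matrix.one_mul]

lemma conj_mul {V : Mat4} (hVV : Vᴴ * V = 1) (M N : Mat4) :
    (V * M * Vᴴ) * (V * N * Vᴴ) = V * (M * N) * Vᴴ := by
  calc V * M * Vᴴ * (V * N * Vᴴ) = V * M * (Vᴴ * V) * (N * Vᴴ) := by
        simp only [Matrix.mul_assoc]
  _ = V * (M * N) * Vᴴ := by rw [hVV, Matrix.mul_one]; simp only [Matrix.mul_assoc]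

lemma kron_one_conjT (A : Mat2) : (A ⊗ₖ (1 : Mat2))ᴴ = Aᴴ ⊗ₖ (1 : Mat2) := by
  ext ⟨i1,i2⟩ ⟨j1,j2⟩
  by_cases h : i2 = j2 <;>
    simp [conjTranspose_apply, Matrix.kroneckerMap_apply, Matrix.one_apply, h, eq_comm]

/- integer coefficient identities, by enumeration -/
lemma coeffZ1 : ∀ x x' : Fin 3 → Fin 2,
    (∑ y : Fin 3, ((-1:ℤ)^((x y).val) * (-1)^((x' y).val)))
      + (-1)^((par x).val) * (-1)^((par x').val)
    = (if x' = x then 4 else 0) - (if x' = bitcompl x then 4 else 0) := by decide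

lemma coeffZ2 : ∀ z x' : Fin 3 → Fin 2, par z = par x' →
    ((1 + ∑ y : Fin 3, ((-1:ℤ)^((x' y).val) * (-1)^((z y).val)))
      = if z = x' then 4 else 0) := by decide

lemma coeffZ3 : ∀ x x' : Fin 3 → Fin 2, par x ≠ par x' → x' ≠ bitcompl x →
    (∑ y : Fin 3, ((-1:ℤ)^((x y).val) * (-1)^((x' y).val))) = 1 := by decide

lemma fin2_ne_iff : ∀ a b c : Fin 2, b ≠ c → (¬ a = b ↔ a = c) := by decide

/- complex versions -/
lemma coeffC1 (x x' : Fin 3 → Fin 2) :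
    (∑ y : Fin 3, ((-1:ℂ)^((x y).val) * (-1)^((x' y).val)))
      + (-1)^((par x).val) * (-1)^((par x').val)
    = (if x' = x then 4 else 0) - (if x' = bitcompl x then 4 else 0) := by
  have h := coeffZ1 x x'
  by_cases h1 : x' = x <;> by_cases h2 : x' = bitcompl x <;>
    simp only [h1, h2, if_true, if_false] at h ⊢ <;> exact_mod_cast h

lemma coeffC2 (z x' : Fin 3 → Fin 2) (hp : par z = par x') :
    (1 + ∑ y : Fin 3, ((-1:ℂ)^((x' y).val) * (-1)^((z y).val)))
      = if z = x' then 4 else 0 := by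
  have h := coeffZ2 z x' hp
  by_cases h1 : z = x' <;> simp only [h1, if_true, if_false] at h ⊢ <;> exact_mod_cast h

lemma coeffC3 (x x' : Fin 3 → Fin 2) (hp : par x ≠ par x') (hc : x' ≠ bitcompl x) :
    (∑ y : Fin 3, ((-1:ℂ)^((x y).val) * (-1)^((x' y).val))) = 1 := by
  exact_mod_cast coeffZ3 x x' hp hc

end PMRAC

/-- Theorem 1(ii): if the average success probability of the variant of 3-bit
PMRAC attains the optimal value 1/2 + 1/√6, then for all x ≠ x',
Tr[ρ_x ρ_{x'}] = 0 whenever x' is the bitwise complement of x or lies in the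
same parity class as x, and Tr[ρ_x ρ_{x'}] = 1/3 otherwise. -/
theorem optimal_implies_overlap_structure
    (ρ : Mat4) (hρ : ρ.PosSemidef) (hρtr : ρ.trace = 1)
    (U : (Fin 3 → Fin 2) → Mat2)
    (hU : ∀ x, U x ∈ Matrix.unitaryGroup (Fin 2) ℂ)
    (B : Fin 3 → Mat4)
    (hB : ∀ y, (B y).IsHermitian)
    (hB2 : ∀ y, B y * B y = 1)
    (hopt : ((24 : ℂ))⁻¹ * ∑ y : Fin 3, ∑ x : Fin 3 → Fin 2,
        ((ρst ρ U x) * ((2 : ℂ)⁻¹ • (1 + ((-1 : ℂ) ^ (x y).val) • B y))).trace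
      = ((1 / 2 + 1 / Real.sqrt 6 : ℝ) : ℂ)) :
    ∀ x x', x ≠ x' →
      ((x' = bitcompl x ∨ par x = par x') → (ρst ρ U x * ρst ρ U x').trace = 0) ∧
      ((x' ≠ bitcompl x ∧ par x ≠ par x') → (ρst ρ U x * ρst ρ U x').trace = 1 / 3) := by
  classical
  set A : (Fin 3 → Fin 2) → Mat4 := ρst ρ U with hAdef
  -- unitarity of the local rotations
  have hVV : ∀ x, (U x ⊗ₖ (1 : Mat2))ᴴ * (U x ⊗ₖ (1 : Mat2)) = 1 := by
    intro x
    rw [PMRAC.kron_one_conjT, ← Matrix.mul_kronecker_mul]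
    rw [show (U x)ᴴ * U x = 1 by
      rw [← Matrix.star_eq_conjTranspose]; exact (Matrix.mem_unitaryGroup_iff').mp (hU x)]
    simp [Matrix.one_kronecker_one]
  have hAconj : ∀ x, A x = (U x ⊗ₖ (1 : Mat2)) * ρ * (U x ⊗ₖ (1 : Mat2))ᴴ := fun x => rfl
  have hApsd : ∀ x, (A x).PosSemidef := fun x => hρ.mul_mul_conjTranspose_same _
  have hAH : ∀ x, (A x).IsHermitian := fun x => (hApsd x).1
  have hAtr : ∀ x, (A x).trace = 1 := by
    intro x; rw [hAconj x, PMRAC.conj_trace (hVV x), hρtr]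
  have hAmulA : ∀ x, A x * A x = (U x ⊗ₖ (1 : Mat2)) * (ρ * ρ) * (U x ⊗ₖ (1 : Mat2))ᴴ := by
    intro x; rw [hAconj x, PMRAC.conj_mul (hVV x)]
  obtain ⟨r, hrtr, hr1, hproj⟩ := PMRAC.trace_sq_facts ρ hρ hρtr
  have hA2tr : ∀ x, (A x * A x).trace = (r : ℂ) := by
    intro x; rw [hAmulA x, PMRAC.conj_trace (hVV x), hrtr]
  -- the signed sums
  set S : Fin 3 → Mat4 := fun y => ∑ x, ((-1:ℂ)^((x y).val)) • A x with hSdef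
  set W : Mat4 := ∑ x, ((-1:ℂ)^((par x).val)) • A x with hWdef
  have hstar_sign : ∀ n : ℕ, star ((-1:ℂ)^n) = (-1:ℂ)^n := by
    intro n; rw [star_pow]; norm_num
  have hsign_sq : ∀ n : ℕ, ((-1:ℂ)^n) * ((-1:ℂ)^n) = 1 := by
    intro n; rw [← pow_add]; exact Even.neg_one_pow ⟨n, rfl⟩
  have hSH : ∀ y, (S y).IsHermitian := by
    intro y
    rw [hSdef, Matrix.IsHermitian]
    rw [Matrix.conjTranspose_sum]
    refine Finset.sum_congr rfl fun x _ => ?_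
    rw [Matrix.conjTranspose_smul, hstar_sign, (hAH x).eq]
  have hWH : W.IsHermitian := by
    rw [hWdef, Matrix.IsHermitian, Matrix.conjTranspose_sum]
    refine Finset.sum_congr rfl fun x _ => ?_
    rw [Matrix.conjTranspose_smul, hstar_sign, (hAH x).eq]
  -- Step 1: the correlation value
  set t : ℂ := ∑ y : Fin 3, (S y * B y).trace with htdef
  have hSB : ∀ y, (S y * B y).trace
      = ∑ x, ((-1:ℂ)^((x y).val)) * (A x * B y).trace := by
    intro y
    rw [hSdef]
    rw [Finset.sum_mul, Matrix.trace_sum]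
    refine Finset.sum_congr rfl fun x _ => ?_
    rw [smul_mul_assoc, Matrix.trace_smul, smul_eq_mul]
  have hterm : ∀ (y : Fin 3) (x : Fin 3 → Fin 2),
      ((A x) * ((2 : ℂ)⁻¹ • (1 + ((-1 : ℂ) ^ (x y).val) • B y))).trace
      = 2⁻¹ + 2⁻¹ * (((-1:ℂ)^((x y).val)) * (A x * B y).trace) := by
    intro y x
    rw [mul_smul_comm, mul_add, Matrix.mul_one, mul_smul_comm, Matrix.trace_smul,
      Matrix.trace_add, Matrix.trace_smul, hAtr x, smul_eq_mul, smul_eq_mul]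
    ring
  have hcard8 : (Finset.univ : Finset (Fin 3 → Fin 2)).card = 8 := by decide
  have hinner : ∀ y : Fin 3, ∑ x : Fin 3 → Fin 2,
      ((A x) * ((2 : ℂ)⁻¹ • (1 + ((-1 : ℂ) ^ (x y).val) • B y))).trace
      = 4 + 2⁻¹ * (S y * B y).trace := by
    intro y
    rw [hSB y, Finset.mul_sum]
    calc ∑ x : Fin 3 → Fin 2, ((A x) * ((2 : ℂ)⁻¹ • (1 + ((-1 : ℂ) ^ (x y).val) • B y))).trace
        = ∑ x : Fin 3 → Fin 2, (2⁻¹ + 2⁻¹ * (((-1:ℂ)^((x y).val)) * (A x * B y).trace)) :=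
          Finset.sum_congr rfl fun x _ => hterm y x
      _ = 8 * 2⁻¹ + ∑ x : Fin 3 → Fin 2, 2⁻¹ * (((-1:ℂ)^((x y).val)) * (A x * B y).trace) := by
          rw [Finset.sum_add_distrib, Finset.sum_const, hcard8]
          simp [nsmul_eq_mul]
      _ = 4 + ∑ x : Fin 3 → Fin 2, 2⁻¹ * (((-1:ℂ)^((x y).val)) * (A x * B y).trace) := by
          norm_num
  have hLHS : ∑ y : Fin 3, ∑ x : Fin 3 → Fin 2,
      ((A x) * ((2 : ℂ)⁻¹ • (1 + ((-1 : ℂ) ^ (x y).val) • B y))).trace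
      = 12 + 2⁻¹ * t := by
    calc ∑ y : Fin 3, ∑ x : Fin 3 → Fin 2,
        ((A x) * ((2 : ℂ)⁻¹ • (1 + ((-1 : ℂ) ^ (x y).val) • B y))).trace
        = ∑ y : Fin 3, (4 + 2⁻¹ * (S y * B y).trace) :=
          Finset.sum_congr rfl fun y _ => hinner y
      _ = 12 + 2⁻¹ * t := by
          rw [Finset.sum_add_distrib, Finset.sum_const, htdef, Finset.mul_sum]
          simp [nsmul_eq_mul]
          norm_num
  have hsqrt6 : Real.sqrt 6 ≠ 0 := by
    rw [Real.sqrt_ne_zero']; norm_num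
  have ht : t = ((48 / Real.sqrt 6 : ℝ) : ℂ) := by
    have h6 : ((Real.sqrt 6 : ℝ) : ℂ) ≠ 0 := by exact_mod_cast hsqrt6
    have hopt' := hopt
    rw [hLHS] at hopt'
    push_cast at hopt' ⊢
    field_simp at hopt' ⊢
    linear_combination hopt'
  -- Step 2: master operator identity
  have hexpand : ∀ f g : (Fin 3 → Fin 2) → ℂ,
      (∑ x, f x • A x) * (∑ x', g x' • A x')
      = ∑ x, ∑ x', (f x * g x') • (A x * A x') := by
    intro f g
    rw [Finset.sum_mul_sum]
    exact Finset.sum_congr rfl fun x _ => Finset.sum_congr rfl fun x' _ =>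
      smul_mul_smul_comm (f x) (A x) (g x') (A x')
  have hMaster : (∑ y, S y * S y) + W * W
      = (4:ℂ) • (∑ x, A x * A x) - (4:ℂ) • (∑ x, A x * A (bitcompl x)) := by
    have hSS : ∀ y, S y * S y = ∑ x, ∑ x',
        (((-1:ℂ)^((x y).val)) * ((-1:ℂ)^((x' y).val))) • (A x * A x') := by
      intro y; rw [hSdef]; exact hexpand _ _
    have hWW : W * W = ∑ x, ∑ x',
        (((-1:ℂ)^((par x).val)) * ((-1:ℂ)^((par x').val))) • (A x * A x') := by
      rw [hWdef]; exact hexpand _ _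
    calc (∑ y, S y * S y) + W * W
        = ∑ x, ∑ x', ((∑ y : Fin 3, ((-1:ℂ)^((x y).val)) * ((-1:ℂ)^((x' y).val)))
            + ((-1:ℂ)^((par x).val)) * ((-1:ℂ)^((par x').val))) • (A x * A x') := by
          rw [hWW]
          rw [show (∑ y, S y * S y) = ∑ x, ∑ x',
              (∑ y : Fin 3, ((-1:ℂ)^((x y).val)) * ((-1:ℂ)^((x' y).val))) • (A x * A x') by
            rw [Finset.sum_congr rfl fun y _ => hSS y]
            rw [Finset.sum_comm]
            refine Finset.sum_congr rfl fun x _ => ?_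
            rw [Finset.sum_comm]
            refine Finset.sum_congr rfl fun x' _ => ?_
            rw [Finset.sum_smul]]
          rw [← Finset.sum_add_distrib]
          refine Finset.sum_congr rfl fun x _ => ?_
          rw [← Finset.sum_add_distrib]
          refine Finset.sum_congr rfl fun x' _ => ?_
          rw [add_smul]
      _ = ∑ x, ((4:ℂ) • (A x * A x) - (4:ℂ) • (A x * A (bitcompl x))) := by
          refine Finset.sum_congr rfl fun x _ => ?_
          calc ∑ x', ((∑ y : Fin 3, ((-1:ℂ)^((x y).val)) * ((-1:ℂ)^((x' y).val)))
                + ((-1:ℂ)^((par x).val)) * ((-1:ℂ)^((par x').val))) • (A x * A x')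
              = ∑ x', (((if x' = x then (4:ℂ) else 0) • (A x * A x'))
                  - ((if x' = bitcompl x then (4:ℂ) else 0) • (A x * A x'))) := by
                refine Finset.sum_congr rfl fun x' _ => ?_
                rw [PMRAC.coeffC1 x x', sub_smul]
            _ = (4:ℂ) • (A x * A x) - (4:ℂ) • (A x * A (bitcompl x)) := by
                rw [Finset.sum_sub_distrib]
                congr 1
                · simp only [ite_smul, zero_smul]
                  rw [Finset.sum_ite_eq']
                  simp
                · simp only [ite_smul, zero_smul]
                  rw [Finset.sum_ite_eq']
                  simp
      _ = (4:ℂ) • (∑ x, A x * A x) - (4:ℂ) • (∑ x, A x * A (bitcompl x)) := by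
          rw [Finset.sum_sub_distrib, Finset.smul_sum, Finset.smul_sum]
  -- Step 3: trace quantities and ordering
  set Qq : ℂ := ∑ y, (S y * S y).trace with hQqdef
  set Dp : ℂ := (W * W).trace with hDpdef
  set Cc : ℂ := ∑ x, (A x * A (bitcompl x)).trace with hCcdef
  have htrM : Qq + Dp = 32 * (r:ℂ) - 4 * Cc := by
    have h := congrArg Matrix.trace hMaster
    rw [Matrix.trace_add, Matrix.trace_sub, Matrix.trace_smul, Matrix.trace_smul,
      Matrix.trace_sum, Matrix.trace_sum] at h
    rw [hQqdef, hDpdef, hCcdef]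
    rw [Matrix.trace_sum] at h
    rw [Finset.sum_congr rfl (fun x _ => hA2tr x), Finset.sum_const, hcard8] at h
    rw [h]
    simp [nsmul_eq_mul, smul_eq_mul]
    ring
  have hCc0 : 0 ≤ Cc :=
    Finset.sum_nonneg fun x _ => PMRAC.psd_trace_nonneg (hApsd x) (hApsd _)
  have hDp0 : 0 ≤ Dp := PMRAC.herm_sq_trace_nonneg hWH
  -- Step 4: sum of squares
  set c : ℝ := Real.sqrt 6 / 4 with hcdef
  set Mm : Fin 3 → Mat4 := fun y => ((c:ℝ):ℂ) • S y - B y with hMmdef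
  have hMH : ∀ y, (Mm y).IsHermitian := by
    intro y
    rw [hMmdef, Matrix.IsHermitian, Matrix.conjTranspose_sub, Matrix.conjTranspose_smul,
      Complex.star_def, Complex.conj_ofReal, (hSH y).eq, (hB y).eq]
  have hcc : ((c:ℝ):ℂ) * ((c:ℝ):ℂ) = 3/8 := by
    have : (c:ℝ) * c = 3/8 := by
      rw [hcdef, div_mul_div_comm, Real.mul_self_sqrt (by norm_num)]
      norm_num
    calc ((c:ℝ):ℂ) * ((c:ℝ):ℂ) = (((c*c : ℝ)):ℂ) := by push_cast; ring
    _ = 3/8 := by rw [this]; norm_num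
  have hMsq : ∀ y, (Mm y * Mm y).trace
      = (3/8:ℂ) * (S y * S y).trace - 2 * ((c:ℝ):ℂ) * (S y * B y).trace + 4 := by
    intro y
    have hexp : Mm y * Mm y = (((c:ℝ):ℂ) * ((c:ℝ):ℂ)) • (S y * S y)
        - ((c:ℝ):ℂ) • (S y * B y) - ((c:ℝ):ℂ) • (B y * S y) + B y * B y := by
      rw [hMmdef]
      simp only []
      rw [sub_mul, mul_sub, mul_sub, smul_mul_smul_comm, smul_mul_assoc, mul_smul_comm]
      abel
    rw [hexp, Matrix.trace_add, Matrix.trace_sub, Matrix.trace_sub, Matrix.trace_smul,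
      Matrix.trace_smul, Matrix.trace_smul, hB2 y, Matrix.trace_mul_comm (B y) (S y), hcc]
    have h4 : (Matrix.trace (1 : Mat4)) = 4 := by simp
    rw [h4]
    simp only [smul_eq_mul]
    ring
  have hc24 : 2 * ((c:ℝ):ℂ) * t = 24 := by
    rw [ht, hcdef]
    have : 2 * (Real.sqrt 6 / 4) * (48 / Real.sqrt 6) = 24 := by
      field_simp
      ring
    calc 2 * ((Real.sqrt 6 / 4 : ℝ):ℂ) * ((48 / Real.sqrt 6 : ℝ):ℂ)
        = ((2 * (Real.sqrt 6 / 4) * (48 / Real.sqrt 6) : ℝ) : ℂ) := by push_cast; ring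
    _ = 24 := by rw [this]; norm_num
  have hRval : ∑ y, (Mm y * Mm y).trace = (3/8:ℂ) * Qq - 12 := by
    rw [Finset.sum_congr rfl fun y _ => hMsq y]
    rw [Finset.sum_add_distrib, Finset.sum_sub_distrib, ← Finset.mul_sum, ← hQqdef,
      ← Finset.mul_sum, ← htdef, hc24, Finset.sum_const]
    simp [nsmul_eq_mul]
    ring
  have hsumM0 : 0 ≤ ∑ y, (Mm y * Mm y).trace :=
    Finset.sum_nonneg fun y _ => PMRAC.herm_sq_trace_nonneg (hMH y)
  have hQge : (32:ℂ) ≤ Qq := by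
    have h0 : 0 ≤ (3/8:ℂ) * Qq - 12 := hRval ▸ hsumM0
    have h12 : (12:ℂ) ≤ (3/8:ℂ) * Qq := by rwa [sub_nonneg] at h0
    have h83 : (0:ℂ) ≤ (8/3:ℂ) := by
      rw [show (8/3:ℂ) = ((8/3:ℝ):ℂ) by norm_num]
      exact Complex.zero_le_real.mpr (by norm_num)
    calc (32:ℂ) = (8/3:ℂ) * 12 := by norm_num
    _ ≤ (8/3:ℂ) * ((3/8:ℂ) * Qq) := mul_le_mul_of_nonneg_left h12 h83
    _ = Qq := by ring
  have hr32 : 32 * ((r:ℂ)) ≤ 32 := by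
    calc 32 * (r:ℂ) = ((32 * r : ℝ):ℂ) := by push_cast; ring
    _ ≤ ((32:ℝ):ℂ) := Complex.real_le_real.mpr (by linarith)
    _ = 32 := by norm_num
  have h4Cc0 : 0 ≤ 4 * Cc := by
    have h4 : (0:ℂ) ≤ 4 := by
      rw [show (4:ℂ) = ((4:ℝ):ℂ) by norm_num]
      exact Complex.zero_le_real.mpr (by norm_num)
    exact mul_nonneg h4 hCc0
  have hQle : Qq ≤ 32 := by
    have he : Qq = 32 * (r:ℂ) - (4 * Cc + Dp) := by linear_combination htrM
    rw [he]
    calc 32 * (r:ℂ) - (4 * Cc + Dp) ≤ 32 * (r:ℂ) := sub_le_self _ (add_nonneg h4Cc0 hDp0)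
    _ ≤ 32 := hr32
  have hQ32 : Qq = 32 := le_antisymm hQle hQge
  have h4CD : 4 * Cc + Dp = 32 * (r:ℂ) - 32 := by linear_combination htrM - hQ32
  have hCD0 : 4 * Cc + Dp = 0 :=
    le_antisymm (h4CD ▸ (sub_nonpos.mpr hr32)) (add_nonneg h4Cc0 hDp0)
  have hCceq : Cc = 0 := by
    have h1 : 4 * Cc ≤ 0 := by
      calc 4 * Cc ≤ 4 * Cc + Dp := le_add_of_nonneg_right hDp0
      _ = 0 := hCD0
    have h2 : (4:ℂ) * Cc = 0 := le_antisymm h1 h4Cc0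
    have := mul_eq_zero.mp h2
    simpa using this
  have hDpeq : Dp = 0 := by linear_combination hCD0 - 4 * hCceq
  have hreq : (r:ℂ) = 1 := by linear_combination (hCD0 - h4CD) / 32
  -- consequences
  have hMsum0 : ∑ y, (Mm y * Mm y).trace = 0 := by
    rw [hRval, hQ32]; norm_num
  have hMzero : ∀ y, Mm y = 0 := by
    intro y
    refine PMRAC.herm_eq_zero_of_sq_trace (hMH y) ?_
    exact (Finset.sum_eq_zero_iff_of_nonneg
      (fun y _ => PMRAC.herm_sq_trace_nonneg (hMH y))).mp hMsum0 y (Finset.mem_univ y)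
  have hBS : ∀ y, B y = ((c:ℝ):ℂ) • S y := by
    intro y
    have h := hMzero y
    rw [hMmdef] at h
    simp only [] at h
    rw [sub_eq_zero] at h
    exact h.symm
  have hSsq : ∀ y, S y * S y = (8/3:ℂ) • (1 : Mat4) := by
    intro y
    have h := hB2 y
    rw [hBS y, smul_mul_smul_comm, hcc] at h
    calc S y * S y = (8/3:ℂ) • ((3/8:ℂ) • (S y * S y)) := by
          rw [smul_smul]; norm_num
    _ = (8/3:ℂ) • (1 : Mat4) := by rw [h]
  -- Step 5: pointwise facts
  have hACtr : ∀ x, (A x * A (bitcompl x)).trace = 0 := by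
    intro x
    exact (Finset.sum_eq_zero_iff_of_nonneg
      (fun x _ => PMRAC.psd_trace_nonneg (hApsd x) (hApsd _))).mp hCceq x (Finset.mem_univ x)
  have hACzero : ∀ x, A x * A (bitcompl x) = 0 := fun x =>
    PMRAC.psd_mul_eq_zero (hApsd x) (hApsd _) (hACtr x)
  have hW0 : W = 0 := PMRAC.herm_eq_zero_of_sq_trace hWH hDpeq
  have hrr : ρ * ρ = ρ := by
    refine hproj ?_
    rw [hrtr]; exact_mod_cast hreq
  have hAproj : ∀ x, A x * A x = A x := by
    intro x
    rw [hAmulA x, hrr, ← hAconj x]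
  -- Step 6: the states sum to twice the identity
  have hsumA : ∑ x, A x = (2:ℂ) • (1 : Mat4) := by
    have h8 : (∑ y, S y * S y) = (8:ℂ) • (1 : Mat4) := by
      rw [Finset.sum_congr rfl fun y _ => hSsq y, Finset.sum_const]
      rw [show (Finset.univ : Finset (Fin 3)).card = 3 from rfl,
        ← Nat.cast_smul_eq_nsmul ℂ, smul_smul]
      norm_num
    have hMaster' := hMaster
    rw [h8, hW0, zero_mul] at hMaster'
    rw [Finset.sum_congr rfl (fun x _ => hAproj x)] at hMaster'
    rw [Finset.sum_congr rfl (fun x _ => hACzero x), Finset.sum_const, smul_zero] at hMaster'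
    rw [smul_zero, sub_zero, add_zero] at hMaster'
    have := congrArg (fun M : Mat4 => (4:ℂ)⁻¹ • M) hMaster'
    simp only [smul_smul] at this
    rw [show ((4:ℂ)⁻¹ * 8) = 2 by norm_num, show ((4:ℂ)⁻¹ * 4) = 1 by norm_num,
      one_smul] at this
    exact this.symm
  -- Step 7: each parity class sums to the identity
  have hfilter_not : ∀ u : Fin 2, u ≠ 0 → True := fun _ _ => trivial
  have hsplit_sets : (Finset.univ.filter (fun z : Fin 3 → Fin 2 => ¬ par z = 0))
      = Finset.univ.filter (fun z => par z = 1) :=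
    Finset.filter_congr (fun z _ => PMRAC.fin2_ne_iff (par z) 0 1 (by decide))
  have hE01 : (∑ z ∈ Finset.univ.filter (fun z : Fin 3 → Fin 2 => par z = 0), A z)
      + (∑ z ∈ Finset.univ.filter (fun z : Fin 3 → Fin 2 => par z = 1), A z)
      = (2:ℂ) • (1 : Mat4) := by
    rw [← hsplit_sets, Finset.sum_filter_add_sum_filter_not, hsumA]
  have hWsplit : W = (∑ z ∈ Finset.univ.filter (fun z : Fin 3 → Fin 2 => par z = 0), A z)
      - (∑ z ∈ Finset.univ.filter (fun z : Fin 3 → Fin 2 => par z = 1), A z) := by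
    rw [hWdef, ← Finset.sum_filter_add_sum_filter_not Finset.univ
      (fun z : Fin 3 → Fin 2 => par z = 0)
      (fun z => ((-1:ℂ)^((par z).val)) • A z), hsplit_sets, sub_eq_add_neg]
    congr 1
    · refine Finset.sum_congr rfl fun z hz => ?_
      rw [(Finset.mem_filter.mp hz).2]
      simp
    · rw [← Finset.sum_neg_distrib]
      refine Finset.sum_congr rfl fun z hz => ?_
      rw [(Finset.mem_filter.mp hz).2]
      simp
  have hWE : (∑ z ∈ Finset.univ.filter (fun z : Fin 3 → Fin 2 => par z = 0), A z)
      = (∑ z ∈ Finset.univ.filter (fun z : Fin 3 → Fin 2 => par z = 1), A z) := by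
    rw [← sub_eq_zero, ← hWsplit]
    exact hW0
  have hclass : ∀ u : Fin 2,
      (∑ z ∈ Finset.univ.filter (fun z : Fin 3 → Fin 2 => par z = u), A z) = 1 := by
    have hE0 : (∑ z ∈ Finset.univ.filter (fun z : Fin 3 → Fin 2 => par z = 0), A z)
        = 1 := by
      have h2 : (2:ℂ) • (∑ z ∈ Finset.univ.filter
          (fun z : Fin 3 → Fin 2 => par z = 0), A z) = (2:ℂ) • (1 : Mat4) := by
        rw [two_smul]
        nth_rewrite 2 [hWE]
        exact hE01
      exact smul_right_injective Mat4 (by norm_num : (2:ℂ) ≠ 0) h2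
    intro u
    by_cases hu : u = 0
    · subst hu; exact hE0
    · have hu1 : u = 1 := by
        have : ∀ v : Fin 2, v ≠ 0 → v = 1 := by decide
        exact this u hu
      subst hu1
      rw [← hWE]
      exact hE0
  -- Step 8: orthogonality within a parity class
  have horthtr : ∀ z z', z ≠ z' → par z = par z' → (A z * A z').trace = 0 := by
    intro z z' hne hpar
    have hmemz : z ∈ Finset.univ.filter (fun w : Fin 3 → Fin 2 => par w = par z) :=
      Finset.mem_filter.mpr ⟨Finset.mem_univ _, rfl⟩
    have hmemz' : z' ∈ (Finset.univ.filter
        (fun w : Fin 3 → Fin 2 => par w = par z)).erase z :=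
      Finset.mem_erase.mpr ⟨Ne.symm hne,
        Finset.mem_filter.mpr ⟨Finset.mem_univ _, hpar.symm⟩⟩
    have htr1 : ∑ w ∈ Finset.univ.filter (fun w : Fin 3 → Fin 2 => par w = par z),
        (A z * A w).trace = 1 := by
      rw [← Matrix.trace_sum]
      rw [← Finset.mul_sum, hclass (par z), Matrix.mul_one, hAtr]
    have hzero : ∑ w ∈ (Finset.univ.filter
        (fun w : Fin 3 → Fin 2 => par w = par z)).erase z, (A z * A w).trace = 0 := by
      have := Finset.add_sum_erase _ (fun w => (A z * A w).trace) hmemz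
      rw [htr1] at this
      simp only [hAproj z, hAtr z] at this
      linear_combination this
    exact (Finset.sum_eq_zero_iff_of_nonneg
      (fun w _ => PMRAC.psd_trace_nonneg (hApsd z) (hApsd w))).mp hzero z' hmemz'
  have horth : ∀ z z', z ≠ z' → par z = par z' → A z * A z' = 0 := fun z z' hne hpar =>
    PMRAC.psd_mul_eq_zero (hApsd z) (hApsd z') (horthtr z z' hne hpar)
  -- Final assembly
  intro x x' hne
  constructor
  · rintro (rfl | hpar)
    · exact hACtr x
    · exact horthtr x x' hne hpar
  · rintro ⟨hnc, hpar⟩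
    -- Step 9: the 1/3 overlaps
    set F1 : Finset (Fin 3 → Fin 2) := Finset.univ.filter (fun z => par z = par x)
      with hF1def
    set F2 : Finset (Fin 3 → Fin 2) := Finset.univ.filter (fun z => par z = par x')
      with hF2def
    have hsplitF : (Finset.univ.filter (fun z : Fin 3 → Fin 2 => ¬ par z = par x)) = F2 :=
      Finset.filter_congr (fun z _ => PMRAC.fin2_ne_iff (par z) (par x) (par x') hpar)
    have hmemx : x ∈ F1 := Finset.mem_filter.mpr ⟨Finset.mem_univ _, rfl⟩
    have hmemx' : x' ∈ F2 := Finset.mem_filter.mpr ⟨Finset.mem_univ _, rfl⟩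
    set P : Fin 3 → Mat4 := fun y => ∑ z ∈ F1, ((-1:ℂ)^((z y).val)) • A z with hPdef
    set Qm : Fin 3 → Mat4 := fun y => ∑ z ∈ F2, ((-1:ℂ)^((z y).val)) • A z with hQmdef
    have hSPQ : ∀ y, S y = P y + Qm y := by
      intro y
      rw [hSdef, hPdef, hQmdef]
      simp only []
      rw [← Finset.sum_filter_add_sum_filter_not Finset.univ
        (fun z : Fin 3 → Fin 2 => par z = par x)
        (fun z => ((-1:ℂ)^((z y).val)) • A z), hsplitF]
    have hsqone : ∀ (u : Fin 2) (y : Fin 3),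
        (∑ z ∈ Finset.univ.filter (fun z : Fin 3 → Fin 2 => par z = u),
            ((-1:ℂ)^((z y).val)) • A z)
          * (∑ z ∈ Finset.univ.filter (fun z : Fin 3 → Fin 2 => par z = u),
            ((-1:ℂ)^((z y).val)) • A z) = 1 := by
      intro u y
      rw [Finset.sum_mul_sum]
      have hinner2 : ∀ z ∈ Finset.univ.filter (fun z : Fin 3 → Fin 2 => par z = u),
          ∑ z' ∈ Finset.univ.filter (fun z : Fin 3 → Fin 2 => par z = u),
            (((-1:ℂ)^((z y).val)) • A z) * (((-1:ℂ)^((z' y).val)) • A z') = A z := by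
        intro z hz
        rw [Finset.sum_eq_single_of_mem z hz]
        · rw [smul_mul_smul_comm, hsign_sq, hAproj, one_smul]
        · intro z' hz' hne'
          rw [smul_mul_smul_comm,
            horth z z' (Ne.symm hne')
              (((Finset.mem_filter.mp hz).2).trans ((Finset.mem_filter.mp hz').2).symm),
            smul_zero]
      rw [Finset.sum_congr rfl hinner2, hclass u]
    have hPP : ∀ y, P y * P y = 1 := fun y => hsqone (par x) y
    have hQQ : ∀ y, Qm y * Qm y = 1 := fun y => hsqone (par x') y
    have hPQ : ∀ y, P y * Qm y + Qm y * P y = ((2:ℂ)/3) • (1 : Mat4) := by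
      intro y
      have h := hSsq y
      rw [hSPQ y, add_mul, mul_add, mul_add, hPP y, hQQ y] at h
      have h2 : P y * Qm y + Qm y * P y
          = ((1 : Mat4) + P y * Qm y + (Qm y * P y + 1)) - 1 - 1 := by abel
      rw [h2, h, show ((2:ℂ)/3) = ((8:ℂ)/3 - 1 - 1) by norm_num, sub_smul, sub_smul,
        one_smul]
    have hAxP : ∀ y, A x * P y = ((-1:ℂ)^((x y).val)) • A x := by
      intro y
      rw [hPdef]
      simp only []
      rw [Finset.mul_sum, Finset.sum_eq_single_of_mem x hmemx]
      · rw [mul_smul_comm, hAproj]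
      · intro z hz hne'
        rw [mul_smul_comm,
          horth x z (Ne.symm hne') ((Finset.mem_filter.mp hz).2).symm, smul_zero]
    have hPxA : ∀ y, P y * A x = ((-1:ℂ)^((x y).val)) • A x := by
      intro y
      rw [hPdef]
      simp only []
      rw [Finset.sum_mul, Finset.sum_eq_single_of_mem x hmemx]
      · rw [smul_mul_assoc, hAproj]
      · intro z hz hne'
        rw [smul_mul_assoc,
          horth z x hne' ((Finset.mem_filter.mp hz).2), smul_zero]
    have htrAQ : ∀ y, (A x * Qm y).trace = ((-1:ℂ)^((x y).val)) * (1/3) := by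
      intro y
      have h1 : (A x * (P y * Qm y + Qm y * P y)).trace = 2/3 := by
        rw [hPQ y, mul_smul_comm, Matrix.mul_one, Matrix.trace_smul, hAtr x, smul_eq_mul,
          mul_one]
      rw [mul_add, Matrix.trace_add] at h1
      have e1 : (A x * (P y * Qm y)).trace
          = ((-1:ℂ)^((x y).val)) * (A x * Qm y).trace := by
        rw [← Matrix.mul_assoc, hAxP y, smul_mul_assoc, Matrix.trace_smul, smul_eq_mul]
      have e2 : (A x * (Qm y * P y)).trace
          = ((-1:ℂ)^((x y).val)) * (A x * Qm y).trace := by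
        rw [← Matrix.mul_assoc, Matrix.trace_mul_comm, ← Matrix.mul_assoc, hPxA y,
          smul_mul_assoc, Matrix.trace_smul, smul_eq_mul]
      rw [e1, e2] at h1
      have hs := hsign_sq ((x y).val)
      calc (A x * Qm y).trace
          = (((-1:ℂ)^((x y).val)) * ((-1:ℂ)^((x y).val))) * (A x * Qm y).trace := by
            rw [hs, one_mul]
      _ = ((-1:ℂ)^((x y).val)) * (((-1:ℂ)^((x y).val)) * (A x * Qm y).trace) := by ring
      _ = ((-1:ℂ)^((x y).val)) * (1/3) := by
            rw [show ((-1:ℂ)^((x y).val)) * (A x * Qm y).trace = 1/3 by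
              linear_combination h1 / 2]
    have htrE2 : ∑ z ∈ F2, (A x * A z).trace = 1 := by
      rw [← Matrix.trace_sum, ← Finset.mul_sum, hF2def, hclass (par x'), Matrix.mul_one,
        hAtr]
    have htrQsum : ∀ y, ∑ z ∈ F2, ((-1:ℂ)^((z y).val)) * (A x * A z).trace
        = ((-1:ℂ)^((x y).val)) * (1/3) := by
      intro y
      rw [← htrAQ y, hQmdef]
      simp only []
      rw [Finset.mul_sum, Matrix.trace_sum]
      exact Finset.sum_congr rfl fun z _ => by
        rw [mul_smul_comm, Matrix.trace_smul, smul_eq_mul]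
    have key1 : ∑ z ∈ F2, ((1:ℂ) + ∑ y : Fin 3,
          ((-1:ℂ)^((x' y).val)) * ((-1:ℂ)^((z y).val))) * (A x * A z).trace
        = 4 * (A x * A x').trace := by
      rw [Finset.sum_congr rfl (fun z hz => by
        rw [PMRAC.coeffC2 z x' ((Finset.mem_filter.mp hz).2)])]
      simp only [ite_mul, zero_mul]
      rw [Finset.sum_ite_eq' F2 x' (fun z => 4 * (A x * A z).trace), if_pos hmemx']
    have key2 : ∑ z ∈ F2, ((1:ℂ) + ∑ y : Fin 3,
          ((-1:ℂ)^((x' y).val)) * ((-1:ℂ)^((z y).val))) * (A x * A z).trace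
        = 1 + 1/3 := by
      rw [Finset.sum_congr rfl (fun z _ => by rw [add_mul, one_mul])]
      rw [Finset.sum_add_distrib, htrE2]
      congr 1
      rw [Finset.sum_congr rfl (fun z _ => Finset.sum_mul _ _ _), Finset.sum_comm]
      rw [Finset.sum_congr rfl (fun y _ => by
        rw [Finset.sum_congr rfl (fun z _ => mul_assoc _ _ _), ← Finset.mul_sum,
          htrQsum y])]
      have hc3 : ∑ y : Fin 3, ((-1:ℂ)^((x' y).val)) * ((-1:ℂ)^((x y).val)) = 1 := by
        rw [Finset.sum_congr rfl (fun y _ => mul_comm _ _)]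
        exact PMRAC.coeffC3 x x' hpar hnc
      calc ∑ y : Fin 3, ((-1:ℂ)^((x' y).val)) * (((-1:ℂ)^((x y).val)) * (1/3))
          = (∑ y : Fin 3, ((-1:ℂ)^((x' y).val)) * ((-1:ℂ)^((x y).val))) * (1/3) := by
            rw [Finset.sum_mul]
            exact Finset.sum_congr rfl fun y _ => by ring
      _ = 1/3 := by rw [hc3, one_mul]
    have hfin : (4:ℂ) * (A x * A x').trace = 4 * (1/3) := by
      rw [← key1, key2]; norm_num
    exact mul_left_cancel₀ (by norm_num : (4:ℂ) ≠ 0) hfin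
end
end

section
/- (Theorem 2(ii), determination of Alice's unitaries) Let Q₁, P₁, R₁ be pairwise anticommuting 2×2 Hermitian matrices with Q₁² = P₁² = R₁² = I₂, and likewise Q₂, P₂, R₂ pairwise anticommuting 2×2 Hermitian involutions. Set ρ₀₀₀ = (I₄ − Q₁⊗Q₂ − P₁⊗P₂ − R₁⊗R₂)/4. If U is a 2×2 unitary with (U† ⊗ I₂) ρ₀₀₀ (U ⊗ I₂) = (I₄ − Q₁⊗Q₂ + P₁⊗P₂ + R₁⊗R₂)/4, then there exists z ∈ ℂ with |z| = 1 such that U = zQ₁. -/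
open Matrix
open scoped Kronecker

noncomputable section

namespace AliceAux

/-- trace of a product of anticommuting matrices is zero -/
lemma trace_anticomm {A B : Mat2} (h : A * B + B * A = 0) : trace (A * B) = 0 := by
  have h1 : trace (A * B) + trace (B * A) = 0 := by
    rw [← trace_add, h, trace_zero]
  rw [trace_mul_comm B A] at h1
  exact add_self_eq_zero.mp h1

/-- a matrix anticommuting with an involution is traceless -/
lemma traceless {A B : Mat2} (hB2 : B * B = 1) (h : A * B + B * A = 0) :
    trace A = 0 := by
  have hBA : B * A = -(A * B) := eq_neg_of_add_eq_zero_right h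
  have h2 : trace A = -trace A := by
    conv_lhs => rw [show A = A * B * B by rw [mul_assoc, hB2, mul_one]]
    rw [trace_mul_comm, ← mul_assoc, hBA, neg_mul, trace_neg, mul_assoc, hB2, mul_one]
  linear_combination h2 / 2

/-- partial trace against a weight matrix -/
def ptr (X : Mat2) (M : Mat4) : Mat2 := fun i j => ∑ k, ∑ l, M (i, k) (j, l) * X l k

lemma ptr_kron (X A B : Mat2) : ptr X (A ⊗ₖ B) = (trace (B * X)) • A := by
  ext i j
  simp only [ptr, kroneckerMap_apply, Matrix.smul_apply, trace, diag_apply, mul_apply,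
    Finset.sum_mul, smul_eq_mul]
  apply Finset.sum_congr rfl
  intro k _
  apply Finset.sum_congr rfl
  intro l _
  ring

lemma ptr_add (X : Mat2) (M N : Mat4) : ptr X (M + N) = ptr X M + ptr X N := by
  ext i j
  simp [ptr, add_mul, Finset.sum_add_distrib]

lemma ptr_sub (X : Mat2) (M N : Mat4) : ptr X (M - N) = ptr X M - ptr X N := by
  ext i j
  simp [ptr, sub_mul, Finset.sum_sub_distrib]

end AliceAux

open AliceAux

/-- Theorem 2(ii) (determination of Alice's unitaries): given two triples of
pairwise anticommuting Hermitian involutions {Q₁,P₁,R₁} and {Q₂,P₂,R₂}, set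
ρ₀₀₀ = (I₄ − Q₁⊗Q₂ − P₁⊗P₂ − R₁⊗R₂)/4. If a 2×2 unitary U satisfies
(U† ⊗ I₂) ρ₀₀₀ (U ⊗ I₂) = (I₄ − Q₁⊗Q₂ + P₁⊗P₂ + R₁⊗R₂)/4, then U = zQ₁ for
some unit complex number z. -/
theorem alices_unitary_determined
    (Q₁ P₁ R₁ Q₂ P₂ R₂ : Mat2)
    (hQ₁ : Q₁.IsHermitian) (hP₁ : P₁.IsHermitian) (hR₁ : R₁.IsHermitian)
    (hQ₂ : Q₂.IsHermitian) (hP₂ : P₂.IsHermitian) (hR₂ : R₂.IsHermitian)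
    (hQ₁2 : Q₁ * Q₁ = 1) (hP₁2 : P₁ * P₁ = 1) (hR₁2 : R₁ * R₁ = 1)
    (hQ₂2 : Q₂ * Q₂ = 1) (hP₂2 : P₂ * P₂ = 1) (hR₂2 : R₂ * R₂ = 1)
    (hQP₁ : Q₁ * P₁ + P₁ * Q₁ = 0) (hQR₁ : Q₁ * R₁ + R₁ * Q₁ = 0)
    (hPR₁ : P₁ * R₁ + R₁ * P₁ = 0)
    (hQP₂ : Q₂ * P₂ + P₂ * Q₂ = 0) (hQR₂ : Q₂ * R₂ + R₂ * Q₂ = 0)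
    (hPR₂ : P₂ * R₂ + R₂ * P₂ = 0)
    (U : Mat2) (hU : U ∈ Matrix.unitaryGroup (Fin 2) ℂ)
    (hconj : (Uᴴ ⊗ₖ (1 : Mat2)) *
        ((4 : ℂ)⁻¹ • ((1 : Mat4) - Q₁ ⊗ₖ Q₂ - P₁ ⊗ₖ P₂ - R₁ ⊗ₖ R₂)) *
        (U ⊗ₖ (1 : Mat2))
      = (4 : ℂ)⁻¹ • ((1 : Mat4) - Q₁ ⊗ₖ Q₂ + P₁ ⊗ₖ P₂ + R₁ ⊗ₖ R₂)) :
    ∃ z : ℂ, ‖z‖ = 1 ∧ U = z • Q₁ := by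
  -- unitarity
  have h1 : Uᴴ * U = 1 := by
    have := hU.1
    rwa [Matrix.star_eq_conjTranspose] at this
  have h2 : U * Uᴴ = 1 := by
    have := hU.2
    rwa [Matrix.star_eq_conjTranspose] at this
  -- trace facts
  have t2 : trace (1 : Mat2) = 2 := by simp [trace_one]
  have tQ₁ : trace Q₁ = 0 := traceless hP₁2 hQP₁
  have tP₁ : trace P₁ = 0 := traceless hQ₁2 (by linear_combination (norm := noncomm_ring) hQP₁)
  have tR₁ : trace R₁ = 0 := traceless hQ₁2 (by linear_combination (norm := noncomm_ring) hQR₁)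
  -- expand hconj
  have hexp : (Uᴴ * (Q₁ * U)) ⊗ₖ Q₂ + (Uᴴ * (P₁ * U)) ⊗ₖ P₂ + (Uᴴ * (R₁ * U)) ⊗ₖ R₂
      = Q₁ ⊗ₖ Q₂ - P₁ ⊗ₖ P₂ - R₁ ⊗ₖ R₂ := by
    have hL : (Uᴴ ⊗ₖ (1 : Mat2)) *
        ((4 : ℂ)⁻¹ • ((1 : Mat4) - Q₁ ⊗ₖ Q₂ - P₁ ⊗ₖ P₂ - R₁ ⊗ₖ R₂)) *
        (U ⊗ₖ (1 : Mat2))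
        = (4 : ℂ)⁻¹ • ((1 : Mat4) - (Uᴴ * (Q₁ * U)) ⊗ₖ Q₂ - (Uᴴ * (P₁ * U)) ⊗ₖ P₂
            - (Uᴴ * (R₁ * U)) ⊗ₖ R₂) := by
      have sand : ∀ A B : Mat2, (Uᴴ ⊗ₖ (1 : Mat2)) * (A ⊗ₖ B) * (U ⊗ₖ (1 : Mat2))
          = (Uᴴ * (A * U)) ⊗ₖ B := by
        intro A B
        rw [← Matrix.mul_kronecker_mul, ← Matrix.mul_kronecker_mul, Matrix.one_mul,
          Matrix.mul_one, Matrix.mul_assoc]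
      have sand1 : (Uᴴ ⊗ₖ (1 : Mat2)) * (1 : Mat4) * (U ⊗ₖ (1 : Mat2)) = 1 := by
        rw [Matrix.mul_one, ← Matrix.mul_kronecker_mul, h1, Matrix.mul_one, one_kronecker_one]
      rw [Matrix.mul_smul, Matrix.smul_mul]
      congr 1
      rw [Matrix.mul_sub, Matrix.mul_sub, Matrix.mul_sub, Matrix.sub_mul, Matrix.sub_mul,
        Matrix.sub_mul]
      rw [sand1, sand, sand, sand]
    rw [hL] at hconj
    have hc2 := smul_right_injective Mat4 (by norm_num : (4 : ℂ)⁻¹ ≠ 0) hconj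
    have h3 : (1 : Mat4) - ((Uᴴ * (Q₁ * U)) ⊗ₖ Q₂ + (Uᴴ * (P₁ * U)) ⊗ₖ P₂
        + (Uᴴ * (R₁ * U)) ⊗ₖ R₂)
        = 1 - (Q₁ ⊗ₖ Q₂ - P₁ ⊗ₖ P₂ - R₁ ⊗ₖ R₂) := by
      calc (1 : Mat4) - ((Uᴴ * (Q₁ * U)) ⊗ₖ Q₂ + (Uᴴ * (P₁ * U)) ⊗ₖ P₂
            + (Uᴴ * (R₁ * U)) ⊗ₖ R₂)
          = 1 - (Uᴴ * (Q₁ * U)) ⊗ₖ Q₂ - (Uᴴ * (P₁ * U)) ⊗ₖ P₂ - (Uᴴ * (R₁ * U)) ⊗ₖ R₂ := by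
            abel
        _ = 1 - Q₁ ⊗ₖ Q₂ + P₁ ⊗ₖ P₂ + R₁ ⊗ₖ R₂ := hc2
        _ = 1 - (Q₁ ⊗ₖ Q₂ - P₁ ⊗ₖ P₂ - R₁ ⊗ₖ R₂) := by abel
    exact sub_right_injective h3
  -- extract the three equations by partial traces
  have extract : ∀ X : Mat2,
      trace (Q₂ * X) • (Uᴴ * (Q₁ * U)) + trace (P₂ * X) • (Uᴴ * (P₁ * U))
        + trace (R₂ * X) • (Uᴴ * (R₁ * U))
      = trace (Q₂ * X) • Q₁ - trace (P₂ * X) • P₁ - trace (R₂ * X) • R₁ := by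
    intro X
    have := congrArg (ptr X) hexp
    simpa [ptr_add, ptr_sub, ptr_kron] using this
  have hA : Uᴴ * (Q₁ * U) = Q₁ := by
    have := extract Q₂
    rw [hQ₂2, t2, trace_anticomm (by linear_combination (norm := noncomm_ring) hQP₂),
      trace_anticomm (by linear_combination (norm := noncomm_ring) hQR₂)] at this
    simp only [zero_smul, add_zero, sub_zero] at this
    exact smul_right_injective Mat2 (by norm_num : (2 : ℂ) ≠ 0) this
  have hB : Uᴴ * (P₁ * U) = -P₁ := by
    have := extract P₂
    rw [hP₂2, t2, trace_anticomm hQP₂, trace_anticomm (by linear_combination (norm := noncomm_ring) hPR₂)] at this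
    simp only [zero_smul, zero_add, add_zero, zero_sub, sub_zero] at this
    rw [← smul_neg] at this
    exact smul_right_injective Mat2 (by norm_num : (2 : ℂ) ≠ 0) this
  have hC : Uᴴ * (R₁ * U) = -R₁ := by
    have := extract R₂
    rw [hR₂2, t2, trace_anticomm hQR₂, trace_anticomm hPR₂] at this
    simp only [zero_smul, zero_add, add_zero, zero_sub, sub_zero] at this
    rw [← smul_neg] at this
    exact smul_right_injective Mat2 (by norm_num : (2 : ℂ) ≠ 0) this
  -- commutation relations of U
  have hUQ : Q₁ * U = U * Q₁ := by
    calc Q₁ * U = (U * Uᴴ) * (Q₁ * U) := by rw [h2, Matrix.one_mul]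
      _ = U * (Uᴴ * (Q₁ * U)) := by noncomm_ring
      _ = U * Q₁ := by rw [hA]
  have hUP : P₁ * U = -(U * P₁) := by
    calc P₁ * U = (U * Uᴴ) * (P₁ * U) := by rw [h2, Matrix.one_mul]
      _ = U * (Uᴴ * (P₁ * U)) := by noncomm_ring
      _ = U * (-P₁) := by rw [hB]
      _ = -(U * P₁) := by noncomm_ring
  have hUR : R₁ * U = -(U * R₁) := by
    calc R₁ * U = (U * Uᴴ) * (R₁ * U) := by rw [h2, Matrix.one_mul]
      _ = U * (Uᴴ * (R₁ * U)) := by noncomm_ring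
      _ = U * (-R₁) := by rw [hC]
      _ = -(U * R₁) := by noncomm_ring
  -- V := Q₁ * U commutes with 1, Q₁, P₁, R₁
  set V : Mat2 := Q₁ * U with hV
  have hVQ : Q₁ * V = V * Q₁ := by
    rw [hV, Matrix.mul_assoc, ← hUQ, ← Matrix.mul_assoc]
  have hQPQ : Q₁ * P₁ = -(P₁ * Q₁) := eq_neg_of_add_eq_zero_left hQP₁
  have hQRQ : Q₁ * R₁ = -(R₁ * Q₁) := eq_neg_of_add_eq_zero_left hQR₁
  have hVP : P₁ * V = V * P₁ := by
    calc P₁ * V = P₁ * Q₁ * U := by rw [hV, Matrix.mul_assoc]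
      _ = -(Q₁ * P₁) * U := by rw [show P₁ * Q₁ = -(Q₁ * P₁) from eq_neg_of_add_eq_zero_right hQP₁]
      _ = Q₁ * (-(P₁ * U)) := by noncomm_ring
      _ = Q₁ * (U * P₁) := by rw [hUP, neg_neg]
      _ = V * P₁ := by rw [hV, Matrix.mul_assoc]
  have hVR : R₁ * V = V * R₁ := by
    calc R₁ * V = R₁ * Q₁ * U := by rw [hV, Matrix.mul_assoc]
      _ = -(Q₁ * R₁) * U := by rw [show R₁ * Q₁ = -(Q₁ * R₁) from eq_neg_of_add_eq_zero_right hQR₁]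
      _ = Q₁ * (-(R₁ * U)) := by noncomm_ring
      _ = Q₁ * (U * R₁) := by rw [hUR, neg_neg]
      _ = V * R₁ := by rw [hV, Matrix.mul_assoc]
  -- {1, Q₁, P₁, R₁} spans Mat2
  set b : Fin 4 → Mat2 := ![1, Q₁, P₁, R₁] with hb
  have hli : LinearIndependent ℂ b := by
    rw [Fintype.linearIndependent_iff]
    intro g hg
    rw [hb] at hg
    simp only [Fin.sum_univ_four, Matrix.cons_val_zero, Matrix.cons_val_one, Matrix.head_cons,
      Matrix.cons_val_two, Matrix.tail_cons, Matrix.cons_val_three] at hg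
    have e0 : g 0 = 0 := by
      have := congrArg trace hg
      simp only [trace_add, trace_smul, t2, tQ₁, tP₁, tR₁, trace_zero, smul_eq_mul,
        mul_zero, add_zero, mul_one] at this
      have h4 : g 0 * 2 = 0 := by linear_combination this
      linear_combination h4 / 2
    have e1 : g 1 = 0 := by
      have := congrArg (fun M => trace (Q₁ * M)) hg
      simp only [Matrix.mul_add, Matrix.mul_smul, trace_add, trace_smul, Matrix.mul_zero,
        Matrix.mul_one, trace_zero, smul_eq_mul, tQ₁, hQ₁2, t2,
        trace_anticomm hQP₁, trace_anticomm hQR₁, mul_zero, add_zero, zero_add] at this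
      have h4 : g 1 * 2 = 0 := by linear_combination this
      linear_combination h4 / 2
    have e2 : g 2 = 0 := by
      have := congrArg (fun M => trace (P₁ * M)) hg
      simp only [Matrix.mul_add, Matrix.mul_smul, trace_add, trace_smul, Matrix.mul_zero,
        Matrix.mul_one, trace_zero, smul_eq_mul, tP₁, hP₁2, t2,
        trace_anticomm (show P₁ * Q₁ + Q₁ * P₁ = 0 by linear_combination (norm := noncomm_ring) hQP₁),
        trace_anticomm hPR₁, mul_zero, add_zero, zero_add] at this
      have h4 : g 2 * 2 = 0 := by linear_combination this
      linear_combination h4 / 2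
    have e3 : g 3 = 0 := by
      have := congrArg (fun M => trace (R₁ * M)) hg
      simp only [Matrix.mul_add, Matrix.mul_smul, trace_add, trace_smul, Matrix.mul_zero,
        Matrix.mul_one, trace_zero, smul_eq_mul, tR₁, hR₁2, t2,
        trace_anticomm (show R₁ * Q₁ + Q₁ * R₁ = 0 by linear_combination (norm := noncomm_ring) hQR₁),
        trace_anticomm (show R₁ * P₁ + P₁ * R₁ = 0 by linear_combination (norm := noncomm_ring) hPR₁),
        mul_zero, add_zero, zero_add] at this
      have h4 : g 3 * 2 = 0 := by linear_combination this
      linear_combination h4 / 2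
    intro i
    fin_cases i <;> assumption
  have hspan : Submodule.span ℂ (Set.range b) = ⊤ := by
    apply Submodule.eq_top_of_finrank_eq
    rw [finrank_span_eq_card hli]
    simp [Module.finrank_matrix]
  -- V commutes with everything
  have hcomm : ∀ B : Mat2, B * V = V * B := by
    intro B
    have hBmem : B ∈ Submodule.span ℂ (Set.range b) := hspan ▸ Submodule.mem_top
    induction hBmem using Submodule.span_induction with
    | mem x hx =>
      obtain ⟨i, rfl⟩ := hx
      fin_cases i
      · simp [hb]
      · simpa [hb] using hVQ
      · simpa [hb] using hVP
      · simpa [hb] using hVR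
    | zero => simp
    | add x y _ _ hx hy => rw [Matrix.add_mul, Matrix.mul_add, hx, hy]
    | smul a x _ hx => rw [Matrix.smul_mul, Matrix.mul_smul, hx]
  -- hence V is scalar
  obtain ⟨c, hc⟩ := Matrix.mem_range_scalar_of_commute_single
    (M := V) (fun i j _ => hcomm _)
  have hVs : V = c • (1 : Mat2) := by
    rw [← hc, Matrix.scalar_apply, Matrix.smul_one_eq_diagonal]
  have hUc : U = c • Q₁ := by
    have : Q₁ * V = U := by rw [hV, ← Matrix.mul_assoc, hQ₁2, Matrix.one_mul]
    rw [← this, hVs, Matrix.mul_smul, Matrix.mul_one]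
  -- norm of c
  refine ⟨c, ?_, hUc⟩
  have hcc : (starRingEnd ℂ) c * c = 1 := by
    have h5 : Uᴴ * U = ((starRingEnd ℂ) c * c) • (1 : Mat2) := by
      rw [hUc, Matrix.conjTranspose_smul, hQ₁.eq, Matrix.smul_mul, Matrix.mul_smul, hQ₁2,
        smul_smul]
      rfl
    rw [h1] at h5
    have := congrFun (congrFun h5 0) 0
    simpa [Matrix.one_apply, Matrix.smul_apply] using this.symm
  have hn2 : ‖c‖ ^ 2 = 1 := by
    have : (Complex.normSq c : ℂ) = 1 := by rw [← hcc]; simp [Complex.normSq_eq_conj_mul_self]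
    have h6 : Complex.normSq c = 1 := by exact_mod_cast this
    rw [Complex.sq_norm, h6]
  nlinarith [norm_nonneg c]
end
end
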